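/- arXiv:1502.06759 — 5 statements merged into one kernel-verified Lean document; each statement's English description precedes it below -/
import Mathlib

section
/- Let P and Q be closed subspaces of a finite-dimensional Hilbert space H. Then the orthogonal projections Π_P and Π_Q commute if and only if every eigenvalue of the self-adjoint operator Π_P ∘ Π_Q restricted to P lies in {0, 1}. -/
open scoped ComplexInnerProductSpace

theorem commute_iff_eigenvalues_zero_one
    {H : Type*} [NormedAddCommGroup H] [InnerProductSpace ℂ H] [FiniteDimensional ℂ H]
    (P Q : Submodule ℂ H) :
    let projP : H →L[ℂ] H := P.subtypeL.comp (P.orthogonalProjectionOnto)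
    let projQ : H →L[ℂ] H := Q.subtypeL.comp (Q.orthogonalProjectionOnto)
    let T : Module.End ℂ P :=
      (P.orthogonalProjectionOnto.comp (projQ.comp P.subtypeL)).toLinearMap
    (projP.comp projQ = projQ.comp projP) ↔
      ∀ μ : ℂ, Module.End.HasEigenvalue T μ → μ = 0 ∨ μ = 1 := by
  intro projP projQ T
  have hPself : ∀ x ∈ P, projP x = x := fun x hx => P.starProjection_eq_self_iff.mpr hx
  have hQself : ∀ x ∈ Q, projQ x = x := fun x hx => Q.starProjection_eq_self_iff.mpr hx
  have hPmemP : ∀ x : H, projP x ∈ P := fun x => Submodule.coe_mem _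
  have hQmemQ : ∀ x : H, projQ x ∈ Q := fun x => Submodule.coe_mem _
  constructor
  · intro h μ hμ
    obtain ⟨x, hx⟩ := hμ.exists_hasEigenvector
    have hx0 : x ≠ 0 := hx.right
    have hTx : T x = μ • x := hx.apply_eq_smul
    have hc : ∀ y : H, projP (projQ y) = projQ (projP y) := fun y => by
      have := congrArg (fun f : H →L[ℂ] H => f y) h
      simpa using this
    have hTT : T (T x) = T x := by
      have e1 : T (T x) = P.orthogonalProjectionOnto (projQ (projP (projQ ↑x))) := rfl
      rw [e1, hc, hPself ↑x x.2]
      have e2 : projQ (projQ ↑x) = projQ ↑x := hQself _ (hQmemQ _)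
      rw [e2]
      rfl
    rw [hTx, map_smul, hTx, smul_smul] at hTT
    have hz : (μ * μ - μ) • x = 0 := by rw [sub_smul, hTT, sub_self]
    have hμμ : μ * μ - μ = 0 := by
      rcases smul_eq_zero.mp hz with h' | h'
      · exact h'
      · exact absurd h' hx0
    have hfac : μ * (μ - 1) = 0 := by linear_combination hμμ
    rcases mul_eq_zero.mp hfac with h0 | h1
    · exact Or.inl h0
    · exact Or.inr (by linear_combination h1)
  · intro h
    have hsymQ : (Q.subtypeL ∘L Q.orthogonalProjectionOnto : H →ₗ[ℂ] H).IsSymmetric :=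
      Q.starProjection_isSymmetric
    have hsa : ∀ a b : H, ⟪projQ a, b⟫ = ⟪a, projQ b⟫ := fun a b => hsymQ a b
    -- T is symmetric
    have hsymT : T.IsSymmetric := by
      intro x y
      have e1 : ⟪T x, y⟫ = ⟪projQ ↑x, (↑y : H)⟫ :=
        P.inner_orthogonalProjectionOnto_eq_of_mem_right y (projQ ↑x)
      have e2 : ⟪x, T y⟫ = ⟪(↑x : H), projQ ↑y⟫ :=
        P.inner_orthogonalProjectionOnto_eq_of_mem_left x (projQ ↑y)
      rw [e1, e2, hsa]
    have htop : (⨆ μ, Module.End.eigenspace T μ) = ⊤ := by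
      have := hsymT.orthogonalComplement_iSup_eigenspaces_eq_bot
      rwa [Submodule.orthogonal_eq_bot_iff] at this
    -- every element of P is sent by projQ into P
    have key : ∀ x : P, projQ ↑x ∈ P := by
      have hle : (⨆ μ, Module.End.eigenspace T μ) ≤
          Submodule.comap ((projQ.comp P.subtypeL).toLinearMap) P := by
        apply iSup_le
        intro μ
        by_cases hev : Module.End.HasEigenvalue T μ
        · rcases h μ hev with rfl | rfl
          · intro x hx
            have hx0 : T x = 0 := by
              have := Module.End.mem_eigenspace_iff.mp hx
              simpa using this
            have h1 : ⟪projQ ↑x, (↑x : H)⟫ = 0 := by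
              have e : ⟪T x, x⟫ = ⟪projQ ↑x, (↑x : H)⟫ :=
                P.inner_orthogonalProjectionOnto_eq_of_mem_right x (projQ ↑x)
              rw [hx0] at e
              simpa using e.symm
            have h2 : ⟪projQ ↑x, projQ ↑x⟫ = 0 := by
              have horth : ⟪(↑x : H) - projQ ↑x, projQ ↑x⟫ = 0 :=
                Q.starProjection_inner_eq_zero (↑x) _ (hQmemQ ↑x)
              have e := inner_sub_left (𝕜 := ℂ) (↑x : H) (projQ ↑x) (projQ ↑x)
              rw [horth] at e
              have h1' : ⟪(↑x : H), projQ ↑x⟫ = 0 := by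
                rw [← inner_conj_symm, h1, map_zero]
              rw [h1'] at e
              linear_combination e
            have hzero : projQ ↑x = 0 := inner_self_eq_zero.mp h2
            show projQ ↑x ∈ P
            rw [hzero]; exact P.zero_mem
          · intro x hx
            have hx1 : T x = x := by
              have := Module.End.mem_eigenspace_iff.mp hx
              simpa using this
            have h1 : ⟪projQ ↑x, (↑x : H)⟫ = ⟪(↑x : H), (↑x : H)⟫ := by
              have e : ⟪T x, x⟫ = ⟪projQ ↑x, (↑x : H)⟫ :=
                P.inner_orthogonalProjectionOnto_eq_of_mem_right x (projQ ↑x)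
              rw [hx1] at e
              rw [← e]
              exact (Submodule.coe_inner P x x).symm
            have hdiff : ⟪(↑x : H) - projQ ↑x, (↑x : H) - projQ ↑x⟫ = 0 := by
              have horth : ⟪(↑x : H) - projQ ↑x, projQ ↑x⟫ = 0 :=
                Q.starProjection_inner_eq_zero (↑x) _ (hQmemQ ↑x)
              rw [inner_sub_right, horth, sub_zero, inner_sub_left, h1, sub_self]
            have hsub : (↑x : H) - projQ ↑x = 0 := inner_self_eq_zero.mp hdiff
            have heq : projQ ↑x = ↑x := (sub_eq_zero.mp hsub).symm
            show projQ ↑x ∈ P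
            rw [heq]; exact x.2
        · have hbot : Module.End.eigenspace T μ = ⊥ := not_not.mp hev
          rw [hbot]
          exact bot_le
      intro x
      have hx : x ∈ (⨆ μ, Module.End.eigenspace T μ) := htop.symm ▸ Submodule.mem_top
      exact hle hx
    have hQP : ∀ x ∈ P, projQ x ∈ P := fun x hx => key ⟨x, hx⟩
    have hQPperp : ∀ y ∈ Pᗮ, projQ y ∈ Pᗮ := by
      intro y hy
      rw [Submodule.mem_orthogonal]
      intro u hu
      rw [← hsa]
      exact hy _ (hQP u hu)
    ext x
    have hsub : x - projP x ∈ Pᗮ := P.sub_starProjection_mem_orthogonal x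
    have h2 : projP (projQ (x - projP x)) = 0 := by
      have hm := hQPperp _ hsub
      have hz := Submodule.orthogonalProjectionOnto_apply_of_mem_orthogonal hm
      calc projP (projQ (x - projP x))
          = (↑(P.orthogonalProjectionOnto (projQ (x - projP x))) : H) := rfl
        _ = ((0 : P) : H) := by rw [hz]
        _ = 0 := rfl
    have h1 : projP (projQ (projP x)) = projQ (projP x) := hPself _ (hQP _ (hPmemP x))
    show projP (projQ x) = projQ (projP x)
    conv_lhs => rw [show x = projP x + (x - projP x) from (add_sub_cancel _ _).symm]
    rw [map_add, map_add, h1, h2, add_zero]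
end

section
/- Let H be a Hilbert space and let a, p be closed subspaces of H. Then the Sasaki projection a & p = p ∧ (a ∨ pᗮ) in the lattice of closed subspaces equals the closure of the image of a under the orthogonal projection Π_p, i.e., a & p = closure{Π_p(ψ) | ψ ∈ a}. (In finite dimension, a & p = {Π_p(ψ) | ψ ∈ a}.) -/
theorem sasaki_eq_closure_image_projection
    {H : Type*} [NormedAddCommGroup H] [InnerProductSpace ℂ H] [CompleteSpace H]
    (a p : Submodule ℂ H) (ha : IsClosed (a : Set H)) (hp : IsClosed (p : Set H))
    [p.HasOrthogonalProjection] :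
    p ⊓ (a ⊔ pᗮ).topologicalClosure
      = (a.map (p.subtypeL.comp (p.orthogonalProjectionOnto) : H →ₗ[ℂ] H)).topologicalClosure := by
  set f : H →L[ℂ] H := p.subtypeL.comp (p.orthogonalProjectionOnto) with hf
  have hfval : ∀ v : H, f v = (p.orthogonalProjectionOnto v : H) := fun v => rfl
  apply le_antisymm
  · rintro x ⟨hxp, hxc⟩
    have hx : x ∈ closure ((a ⊔ pᗮ : Submodule ℂ H) : Set H) := hxc
    have hfx : f x ∈ closure (f '' ((a ⊔ pᗮ : Submodule ℂ H) : Set H)) :=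
      image_closure_subset_closure_image f.continuous ⟨x, hx, rfl⟩
    have hsup : (a ⊔ pᗮ).map (f : H →ₗ[ℂ] H) = a.map (f : H →ₗ[ℂ] H) := by
      rw [Submodule.map_sup]
      have h2 : pᗮ.map (f : H →ₗ[ℂ] H) = ⊥ := by
        rw [Submodule.eq_bot_iff]
        rintro y ⟨v, hv, rfl⟩
        rw [ContinuousLinearMap.coe_coe, hfval, Submodule.orthogonalProjectionOnto_apply_of_mem_orthogonal hv,
          Submodule.coe_zero]
      rw [h2, sup_bot_eq]
    have himg : f '' ((a ⊔ pᗮ : Submodule ℂ H) : Set H) = ((a.map (f : H →ₗ[ℂ] H) : Submodule ℂ H) : Set H) := by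
      rw [← ContinuousLinearMap.coe_coe f, ← Submodule.map_coe, hsup]
    have hfxx : f x = x := by
      exact Submodule.starProjection_eq_self_iff.mpr hxp
    rw [himg, hfxx] at hfx
    exact hfx
  · apply Submodule.topologicalClosure_minimal
    · rintro y ⟨v, hv, rfl⟩
      refine ⟨(p.orthogonalProjectionOnto v).2, ?_⟩
      have : f v = v - (v - f v) := (sub_sub_cancel v (f v)).symm
      rw [ContinuousLinearMap.coe_coe, this]
      apply Submodule.le_topologicalClosure
      exact Submodule.sub_mem _ (Submodule.mem_sup_left hv)
        (Submodule.mem_sup_right (by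
          rw [hfval]; exact Submodule.sub_starProjection_mem_orthogonal v))
    · exact IsClosed.inter hp (Submodule.isClosed_topologicalClosure _)
end

section
/- Let H be a finite-dimensional Hilbert space and let b ≤ a & p in the lattice of subspaces, where & is the Sasaki projection. Then for every vector φ ∈ b there exists ψ ∈ a with φ = Π_p(ψ). -/
theorem exists_preimage_of_le_sasaki
    {H : Type*} [NormedAddCommGroup H] [InnerProductSpace ℂ H] [FiniteDimensional ℂ H]
    (a b p : Submodule ℂ H) (hb : b ≤ p ⊓ (a ⊔ pᗮ)) :
    ∀ φ ∈ b, ∃ ψ ∈ a, φ = (Submodule.orthogonalProjectionOnto p ψ : H) := by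
  intro φ hφ
  obtain ⟨hp, hsup⟩ := hb hφ
  obtain ⟨ψ, hψ, w, hw, hsum⟩ := Submodule.mem_sup.mp hsup
  refine ⟨ψ, hψ, ?_⟩
  have : ψ = φ - w := by rw [← hsum]; abel
  rw [this, map_sub]
  push_cast [Submodule.starProjection_eq_self_iff.mpr hp,
    Submodule.orthogonalProjectionOnto_apply_of_mem_orthogonal hw]
  simp [Submodule.starProjection_eq_self_iff.mpr hp]
end

section
/- Let H be a finite-dimensional Hilbert space and F ⊆ L(H) a Sasaki filter with at most one minimal element. Then F is a principal upper set: there exists e ∈ L(H) with F = {p | e ≤ p}. -/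
theorem sasaki_filter_principal_of_unique_minimal
    {H : Type*} [NormedAddCommGroup H] [InnerProductSpace ℂ H] [FiniteDimensional ℂ H]
    (F : Set (Submodule ℂ H))
    (hne : F.Nonempty)
    (hup : ∀ p q : Submodule ℂ H, p ∈ F → p ≤ q → q ∈ F)
    (hsas : ∀ p q : Submodule ℂ H, p ∈ F → q ∈ F → q ⊓ (p ⊔ qᗮ) ∈ F)
    (hmin : ∀ m₁ m₂ : Submodule ℂ H,
      (m₁ ∈ F ∧ ∀ s ∈ F, ¬ s < m₁) → (m₂ ∈ F ∧ ∀ s ∈ F, ¬ s < m₂) → m₁ = m₂) :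
    ∃ e : Submodule ℂ H, F = {p : Submodule ℂ H | e ≤ p} := by
  classical
  -- pick e ∈ F of minimal finrank
  set S : Set ℕ := (fun p : Submodule ℂ H => Module.finrank ℂ p) '' F with hS
  have hSne : S.Nonempty := hne.image _
  obtain ⟨e, heF, hek⟩ := Nat.sInf_mem hSne
  have hkle : ∀ p ∈ F, Module.finrank ℂ e ≤ Module.finrank ℂ p := by
    intro p hp
    exact le_trans (le_of_eq hek) (Nat.sInf_le ⟨p, hp, rfl⟩)
  -- e is minimal in F
  have hemin : ∀ s ∈ F, ¬ s < e := by
    intro s hs hlt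
    exact absurd (hkle s hs) (not_le.mpr (Submodule.finrank_lt_finrank_of_lt hlt))
  refine ⟨e, Set.ext fun p => ⟨fun hp => ?_, fun hp => hup e p heF hp⟩⟩
  -- Sasaki projection of e onto p
  have htF : p ⊓ (e ⊔ pᗮ) ∈ F := hsas e p heF hp
  set t : Submodule ℂ H := p ⊓ (e ⊔ pᗮ) with ht
  have h1 : Module.finrank ℂ ↥(p ⊔ (e ⊔ pᗮ)) + Module.finrank ℂ ↥t
      = Module.finrank ℂ p + Module.finrank ℂ ↥(e ⊔ pᗮ) :=
    Submodule.finrank_sup_add_finrank_inf_eq p (e ⊔ pᗮ)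
  have h2 : p ⊔ (e ⊔ pᗮ) = ⊤ := by
    rw [eq_top_iff, ← Submodule.sup_orthogonal_of_hasOrthogonalProjection (K := p)]
    exact sup_le le_sup_left (le_sup_of_le_right le_sup_right)
  have h3 : Module.finrank ℂ ↥(e ⊔ pᗮ) + Module.finrank ℂ ↥(e ⊓ pᗮ)
      = Module.finrank ℂ e + Module.finrank ℂ pᗮ :=
    Submodule.finrank_sup_add_finrank_inf_eq e pᗮ
  have h4 : Module.finrank ℂ p + Module.finrank ℂ pᗮ = Module.finrank ℂ H :=
    Submodule.finrank_add_finrank_orthogonal p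
  rw [h2, finrank_top] at h1
  have hle : Module.finrank ℂ ↥t ≤ Module.finrank ℂ e := by omega
  have heq : Module.finrank ℂ ↥t = Module.finrank ℂ e :=
    le_antisymm hle (hkle t htF)
  -- t is also minimal, hence t = e
  have htmin : ∀ s ∈ F, ¬ s < t := by
    intro s hs hlt
    have := Submodule.finrank_lt_finrank_of_lt hlt
    exact absurd (hkle s hs) (by omega)
  have : t = e := hmin t e ⟨htF, htmin⟩ ⟨heF, hemin⟩
  calc e = t := this.symm
    _ ≤ p := inf_le_left
end

section
/- Let H be a Hilbert space and p₁, ..., pₙ closed subspaces. Then the iterated Sasaki projection ((⋯(p₁ & p₂) & ⋯) & pₙ) in the lattice of closed subspaces is nonzero if and only if the composition of orthogonal projections Π_{pₙ} ∘ ⋯ ∘ Π_{p₁} is a nonzero operator. -/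
open Submodule

private noncomputable def Pfun {H : Type*} [NormedAddCommGroup H] [InnerProductSpace ℂ H]
    [FiniteDimensional ℂ H] (q : Submodule ℂ H) : H →L[ℂ] H :=
  q.subtypeL.comp (orthogonalProjection q)

private lemma sasaki_eq_map {H : Type*} [NormedAddCommGroup H] [InnerProductSpace ℂ H]
    [FiniteDimensional ℂ H] (a q : Submodule ℂ H) :
    q ⊓ (a ⊔ qᗮ) = Submodule.map (Pfun q : H →ₗ[ℂ] H) a := by
  ext x
  simp only [Submodule.mem_inf, Submodule.mem_map, ContinuousLinearMap.coe_coe]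
  constructor
  · rintro ⟨hxq, hx⟩
    rcases Submodule.mem_sup.mp hx with ⟨y, hy, z, hz, rfl⟩
    refine ⟨y, hy, ?_⟩
    have h1 : (orthogonalProjection q (y + z) : H) = orthogonalProjection q y := by
      rw [map_add, orthogonalProjectionOnto_apply_of_mem_orthogonal hz,
        add_zero]
    have h2 : (orthogonalProjection q (y + z) : H) = y + z :=
      starProjection_eq_self_iff.mpr hxq
    simpa [Pfun] using h1.symm.trans h2
  · rintro ⟨y, hy, rfl⟩
    refine ⟨by simp [Pfun], ?_⟩
    have heq : (Pfun q) y = y - (y - (orthogonalProjection q y : H)) := by simp [Pfun]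
    rw [heq]
    exact Submodule.sub_mem _ (Submodule.mem_sup_left hy)
      (Submodule.mem_sup_right (sub_starProjection_mem_orthogonal y))

private lemma foldl_sasaki {H : Type*} [NormedAddCommGroup H] [InnerProductSpace ℂ H]
    [FiniteDimensional ℂ H] :
    ∀ (qs : List (Submodule ℂ H)) (f : H →L[ℂ] H),
    qs.foldl (fun (a q : Submodule ℂ H) => q ⊓ (a ⊔ qᗮ)) (Submodule.map (f : H →ₗ[ℂ] H) ⊤) =
      Submodule.map (((qs.map Pfun).foldl (fun acc g => g.comp acc) f : H →L[ℂ] H) : H →ₗ[ℂ] H) ⊤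
  | [], f => rfl
  | q :: qs, f => by
      rw [List.foldl_cons, sasaki_eq_map, ← Submodule.map_comp, List.map_cons, List.foldl_cons]
      have : Submodule.map ((Pfun q : H →ₗ[ℂ] H).comp (f : H →ₗ[ℂ] H)) ⊤ =
          Submodule.map (((Pfun q).comp f : H →L[ℂ] H) : H →ₗ[ℂ] H) ⊤ := rfl
      rw [this]
      exact foldl_sasaki qs ((Pfun q).comp f)

theorem iterated_sasaki_ne_bot_iff_composition_ne_zero
    {H : Type*} [NormedAddCommGroup H] [InnerProductSpace ℂ H] [FiniteDimensional ℂ H]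
    (n : ℕ) (p : Fin (n + 1) → Submodule ℂ H) :
    (List.ofFn fun k : Fin n => p k.succ).foldl
        (fun (a q : Submodule ℂ H) => q ⊓ (a ⊔ qᗮ)) (p 0) ≠ ⊥ ↔
    (List.ofFn fun k : Fin (n + 1) => (p k).subtypeL.comp (Submodule.orthogonalProjectionOnto (p k))).foldl
        (fun acc f => f.comp acc) (ContinuousLinearMap.id ℂ H) ≠ 0 := by
  have hp0 : p 0 = Submodule.map ((Pfun (p 0) : H →L[ℂ] H) : H →ₗ[ℂ] H) ⊤ := by
    ext x
    simp only [Submodule.mem_map, Submodule.mem_top, true_and,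
      ContinuousLinearMap.coe_coe]
    constructor
    · intro hx
      refine ⟨x, ?_⟩
      have : (orthogonalProjection (p 0) x : H) = x :=
        starProjection_eq_self_iff.mpr hx
      simpa [Pfun] using this
    · rintro ⟨y, rfl⟩; simp [Pfun]
  have key := foldl_sasaki (H := H) (List.ofFn fun k : Fin n => p k.succ) (Pfun (p 0))
  have hmap : (List.ofFn fun k : Fin n => p k.succ).map Pfun =
      List.ofFn fun k : Fin n => Pfun (p k.succ) := by
    rw [List.map_ofFn]; rfl
  have hofn : (List.ofFn fun k : Fin (n + 1) => Pfun (p k)) =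
      Pfun (p 0) :: List.ofFn fun k : Fin n => Pfun (p k.succ) := by
    rw [List.ofFn_succ]
  have hcomp : (List.ofFn fun k : Fin (n + 1) => (p k).subtypeL.comp (orthogonalProjection (p k))).foldl
        (fun acc f => f.comp acc) (ContinuousLinearMap.id ℂ H) =
      (List.ofFn fun k : Fin n => Pfun (p k.succ)).foldl (fun acc g => g.comp acc) (Pfun (p 0)) := by
    show (List.ofFn fun k : Fin (n + 1) => Pfun (p k)).foldl (fun acc f => f.comp acc)
        (ContinuousLinearMap.id ℂ H) = _
    rw [hofn, List.foldl_cons]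
    simp
  rw [hp0, key, hmap, hcomp]
  set g := (List.ofFn fun k : Fin n => Pfun (p k.succ)).foldl (fun acc g => g.comp acc) (Pfun (p 0))
  constructor
  · intro h hg
    exact h (by simp [hg])
  · intro hg hbot
    apply hg
    ext x
    have : g x ∈ Submodule.map ((g : H →L[ℂ] H) : H →ₗ[ℂ] H) ⊤ := ⟨x, trivial, rfl⟩
    rw [hbot] at this
    simpa using this
end
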